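/- Let A = {a_0, ..., a_k} with 0 = a_0 < a_1 < ... < a_k, gcd(A) = 1, k ≥ 2, and suppose A = A* (i.e., A is symmetric: a ∈ A iff a_k − a ∈ A). Then in the structure theorem for (hA)^{(t)} = C_t ∪ [c_t, h·a_k − d_t] ∪ (h·a_k − D_t) valid for h ≥ h_t = (k−1)(t·a_k−1)·a_k + 1, one has c_t = d_t and C_t = D_t. -/

import Mathlib

open Finset

/-- `r_{A,h}(n)`: the number of multiset representations of `n` as a sum of `h` elements of `A`. -/
def repCount (A : Finset ℤ) (h : ℕ) (n : ℤ) : ℕ :=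
  ((A.sym h).filter (fun m => (Sym.toMultiset m).sum = n)).card

/-- `(hA)^{(t)}`: integers with at least `t` representations. -/
def sumsetT (A : Finset ℤ) (h t : ℕ) : Set ℤ :=
  {n | t ≤ repCount A h n}

lemma finset_gcd_bezout (s : Finset ℤ) : ∃ f : ℤ → ℤ, ∑ x ∈ s, f x * x = s.gcd id := by
  classical
  induction s using Finset.induction with
  | empty => exact ⟨0, by simp⟩
  | @insert x s hx ih =>
    obtain ⟨f, hf⟩ := ih
    have hgi : (insert x s).gcd id = GCDMonoid.gcd x (s.gcd id) := by
      rw [Finset.gcd_insert]; rfl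
    have hb := Int.gcd_eq_gcd_ab x (s.gcd id)
    have hnorm : (GCDMonoid.gcd x (s.gcd id) : ℤ) = ↑(Int.gcd x (s.gcd id)) := by
      rw [Int.coe_gcd]
    refine ⟨fun y => if y = x then Int.gcdA x (s.gcd id) else Int.gcdB x (s.gcd id) * f y, ?_⟩
    rw [Finset.sum_insert hx, hgi, hnorm, hb]
    simp only [if_pos rfl]
    have : ∑ y ∈ s, (if y = x then Int.gcdA x (s.gcd id) else Int.gcdB x (s.gcd id) * f y) * y
        = Int.gcdB x (s.gcd id) * ∑ y ∈ s, f y * y := by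
      rw [Finset.mul_sum]
      apply Finset.sum_congr rfl
      intro y hy
      rw [if_neg (by rintro rfl; exact hx hy)]
      ring
    rw [this, hf]
    simp only [if_true]
    ring

lemma card_le_count_zero_add_sum (M : Multiset ℤ) (hnn : ∀ x ∈ M, 0 ≤ x) :
    (Multiset.card M : ℤ) ≤ Multiset.count 0 M + M.sum := by
  induction M using Multiset.induction with
  | empty => simp
  | cons x M ih =>
    have hx : 0 ≤ x := hnn x (Multiset.mem_cons_self _ _)
    have ih' := ih (fun y hy => hnn y (Multiset.mem_cons_of_mem hy))
    simp only [Multiset.card_cons, Multiset.sum_cons, Multiset.count_cons]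
    rcases eq_or_lt_of_le hx with h0 | h1
    · rw [if_pos h0]; push_cast; linarith
    · rw [if_neg (by omega)]; push_cast; linarith

lemma multiset_card_le_sum (M : Multiset ℤ) (h1 : ∀ x ∈ M, 1 ≤ x) :
    (Multiset.card M : ℤ) ≤ M.sum := by
  induction M using Multiset.induction with
  | empty => simp
  | cons x M ih =>
    have hx := h1 x (Multiset.mem_cons_self _ _)
    have ih' := ih (fun y hy => h1 y (Multiset.mem_cons_of_mem hy))
    simp only [Multiset.card_cons, Multiset.sum_cons]
    push_cast; linarith

lemma sym_card {h : ℕ} (m : Sym ℤ h) : Multiset.card m.toMultiset = h := m.2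

lemma repCount_stable (A : Finset ℤ) (h0 : (0:ℤ) ∈ A) (hnn : ∀ x ∈ A, 0 ≤ x)
    {n : ℤ} {h h' : ℕ} (hnh : n ≤ (h : ℤ)) (hhh : h ≤ h') :
    repCount A h n = repCount A h' n := by
  classical
  unfold repCount
  have key : ∀ m' : Sym ℤ h', m' ∈ (A.sym h').filter (fun m => (Sym.toMultiset m).sum = n) →
      Multiset.replicate (h' - h) 0 ≤ m'.toMultiset := by
    intro m' hm'
    rw [Finset.mem_filter, Finset.mem_sym_iff] at hm'
    have hc := card_le_count_zero_add_sum m'.toMultiset (fun x hx => hnn x (hm'.1 x hx))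
    rw [sym_card, hm'.2] at hc
    rw [← Multiset.le_count_iff_replicate_le]
    omega
  refine Finset.card_bij'
    (fun m _ => (Sym.mk (m.toMultiset + Multiset.replicate (h' - h) 0) (by
      rw [Multiset.card_add, Multiset.card_replicate, sym_card]; omega) : Sym ℤ h'))
    (fun m' hm' => (Sym.mk (m'.toMultiset - Multiset.replicate (h' - h) 0) (by
      rw [Multiset.card_sub (key m' hm'), Multiset.card_replicate, sym_card]; omega) : Sym ℤ h))
    ?_ ?_ ?_ ?_
  · intro m hm
    rw [Finset.mem_filter, Finset.mem_sym_iff] at hm ⊢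
    refine ⟨fun x hx => ?_, ?_⟩
    · rw [Sym.mem_mk] at hx
      rcases Multiset.mem_add.mp hx with hx | hx
      · exact hm.1 x hx
      · rw [Multiset.eq_of_mem_replicate hx]; exact h0
    · show (m.toMultiset + Multiset.replicate (h' - h) 0).sum = n
      rw [Multiset.sum_add, Multiset.sum_replicate, smul_zero, add_zero]
      exact hm.2
  · intro m' hm'
    have hle := key m' hm'
    rw [Finset.mem_filter, Finset.mem_sym_iff] at hm' ⊢
    refine ⟨fun x hx => ?_, ?_⟩
    · rw [Sym.mem_mk] at hx
      exact hm'.1 x (Multiset.mem_of_le tsub_le_self hx)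
    · show (m'.toMultiset - Multiset.replicate (h' - h) 0).sum = n
      have hsplit : m'.toMultiset - Multiset.replicate (h' - h) 0 + Multiset.replicate (h' - h) 0
          = m'.toMultiset := tsub_add_cancel_of_le hle
      have := congrArg Multiset.sum hsplit
      rw [Multiset.sum_add, Multiset.sum_replicate, smul_zero, add_zero] at this
      rw [this]; exact hm'.2
  · intro m hm
    apply Subtype.ext
    show m.toMultiset + Multiset.replicate (h' - h) 0 - Multiset.replicate (h' - h) 0 = _
    exact add_tsub_cancel_right _ _
  · intro m' hm'
    apply Subtype.ext
    show m'.toMultiset - Multiset.replicate (h' - h) 0 + Multiset.replicate (h' - h) 0 = _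
    exact tsub_add_cancel_of_le (key m' hm')

lemma sum_map_reflect (ak : ℤ) (M : Multiset ℤ) :
    (M.map (fun x => ak - x)).sum = (Multiset.card M : ℤ) * ak - M.sum := by
  induction M using Multiset.induction with
  | empty => simp
  | cons x M ih =>
    simp only [Multiset.map_cons, Multiset.sum_cons, Multiset.card_cons, ih]
    push_cast; ring

lemma reflect_invol (ak : ℤ) {h : ℕ} (m : Sym ℤ h) :
    Sym.map (fun x => ak - x) (Sym.map (fun x => ak - x) m) = m := by
  apply Subtype.ext
  show (Sym.map (fun x => ak - x) (Sym.map (fun x => ak - x) m)).toMultiset = m.toMultiset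
  rw [Sym.coe_map, Sym.coe_map, Multiset.map_map]
  have : ((fun x => ak - x) ∘ fun x => ak - x) = id := by
    funext x; simp [Function.comp]
  rw [this, Multiset.map_id]

lemma repCount_reflect (A : Finset ℤ) (ak : ℤ) (hsymA : A.image (fun x => ak - x) = A)
    (h : ℕ) (n : ℤ) : repCount A h ((h : ℤ) * ak - n) = repCount A h n := by
  classical
  have hmem : ∀ x ∈ A, ak - x ∈ A := by
    intro x hx
    rw [← hsymA]
    exact Finset.mem_image_of_mem _ hx
  unfold repCount
  have hsum : ∀ (m : Sym ℤ h), ((Sym.map (fun x => ak - x) m).toMultiset).sum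
      = (h : ℤ) * ak - m.toMultiset.sum := by
    intro m
    rw [Sym.coe_map, sum_map_reflect, sym_card]
  have hmm : ∀ (m : Sym ℤ h), (∀ x ∈ m, x ∈ A) → ∀ x ∈ Sym.map (fun y => ak - y) m, x ∈ A := by
    intro m hm x hx
    rw [Sym.mem_map] at hx
    obtain ⟨y, hy, rfl⟩ := hx
    exact hmem y (hm y hy)
  refine Finset.card_bij'
    (fun m _ => Sym.map (fun x => ak - x) m)
    (fun m _ => Sym.map (fun x => ak - x) m) ?_ ?_ ?_ ?_
  · intro m hm
    rw [Finset.mem_filter, Finset.mem_sym_iff] at hm ⊢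
    exact ⟨hmm m hm.1, by rw [hsum, hm.2]; ring⟩
  · intro m hm
    rw [Finset.mem_filter, Finset.mem_sym_iff] at hm ⊢
    exact ⟨hmm m hm.1, by rw [hsum, hm.2]⟩
  · intro m _; exact reflect_invol ak m
  · intro m _; exact reflect_invol ak m

lemma rep_bounds (A : Finset ℤ) (ak : ℤ) (hbd : ∀ x ∈ A, 0 ≤ x ∧ x ≤ ak) {h t : ℕ}
    (ht : 0 < t) {n : ℤ} (hn : t ≤ repCount A h n) : 0 ≤ n ∧ n ≤ (h : ℤ) * ak := by
  classical
  have hpos : 0 < ((A.sym h).filter (fun m => (Sym.toMultiset m).sum = n)).card :=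
    lt_of_lt_of_le ht hn
  obtain ⟨m, hm⟩ := Finset.card_pos.mp hpos
  rw [Finset.mem_filter, Finset.mem_sym_iff] at hm
  constructor
  · rw [← hm.2]
    exact Multiset.sum_nonneg (fun x hx => (hbd x (hm.1 x hx)).1)
  · rw [← hm.2]
    have := Multiset.sum_le_card_nsmul m.toMultiset ak (fun x hx => (hbd x (hm.1 x hx)).2)
    rwa [sym_card, nsmul_eq_mul] at this

lemma residue_rep (k : ℕ) (hk : 2 ≤ k) (a : ℕ → ℤ) (ha0 : a 0 = 0)
    (hmono : ∀ i j, i ≤ k → j ≤ k → i < j → a i < a j)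
    (A : Finset ℤ) (hA : A = (Finset.range (k + 1)).image a) (hgcd : A.gcd id = 1)
    (n : ℤ) :
    ∃ S : Multiset ℤ, (∀ x ∈ S, x ∈ A ∧ 0 < x ∧ x ≤ a k - 1) ∧ (a k ∣ n - S.sum) ∧
      (Multiset.card S : ℤ) ≤ ((k : ℤ) - 1) * (a k - 1) := by
  classical
  have akpos : 0 < a k := by
    have := hmono 0 k (by omega) (le_refl k) (by omega)
    omega
  obtain ⟨f, hf⟩ := finset_gcd_bezout A
  rw [hgcd] at hf
  have hinj : ∀ x ∈ Finset.range (k+1), ∀ y ∈ Finset.range (k+1), a x = a y → x = y := by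
    intro x hx y hy hxy
    rw [Finset.mem_range] at hx hy
    by_contra hne
    rcases lt_or_gt_of_ne hne with h | h
    · exact absurd hxy (ne_of_lt (hmono x y (by omega) (by omega) h))
    · exact absurd hxy.symm (ne_of_lt (hmono y x (by omega) (by omega) h))
  have hsum1 : ∑ i ∈ Finset.range (k+1), f (a i) * a i = 1 := by
    rw [hA, Finset.sum_image hinj] at hf
    exact hf
  set g : ℕ → ℤ := fun i => (n * f (a i)) % a k with hg
  have hg0 : ∀ i, 0 ≤ g i := fun i => Int.emod_nonneg _ (by omega)
  have hglt : ∀ i, g i ≤ a k - 1 := by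
    intro i
    have := Int.emod_lt_of_pos ((n * f (a i))) akpos
    simp only [hg]; omega
  set S : Multiset ℤ := (Finset.Ioo 0 k).val.bind (fun i => Multiset.replicate (g i).toNat (a i))
    with hS
  have hmemS : ∀ x ∈ S, x ∈ A ∧ 0 < x ∧ x ≤ a k - 1 := by
    intro x hx
    rw [hS, Multiset.mem_bind] at hx
    obtain ⟨i, hi, hx⟩ := hx
    have hi' : i ∈ Finset.Ioo 0 k := hi
    rw [Finset.mem_Ioo] at hi'
    rw [Multiset.eq_of_mem_replicate hx]
    refine ⟨?_, ?_, ?_⟩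
    · rw [hA]; exact Finset.mem_image_of_mem _ (Finset.mem_range.mpr (by omega))
    · have := hmono 0 i (by omega) (by omega) (by omega); omega
    · have := hmono i k (by omega) (le_refl k) (by omega); omega
  have hcardS : (Multiset.card S : ℤ) ≤ ((k : ℤ) - 1) * (a k - 1) := by
    rw [hS, Multiset.card_bind]
    have h1 : (Multiset.map (Multiset.card ∘ fun i => Multiset.replicate (g i).toNat (a i))
        (Finset.Ioo 0 k).val).sum
        = ∑ i ∈ Finset.Ioo 0 k, (Multiset.card ∘ fun i => Multiset.replicate (g i).toNat (a i)) i :=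
      rfl
    rw [h1]
    simp only [Function.comp, Multiset.card_replicate]
    push_cast
    calc (∑ i ∈ Finset.Ioo 0 k, ((g i).toNat : ℤ))
        ≤ ∑ _i ∈ Finset.Ioo 0 k, (a k - 1) := by
          apply Finset.sum_le_sum
          intro i _
          rw [Int.toNat_of_nonneg (hg0 i)]
          exact hglt i
      _ = ((k : ℤ) - 1) * (a k - 1) := by
          rw [Finset.sum_const, Nat.card_Ioo, nsmul_eq_mul]
          have h2 : ((k - 0 - 1 : ℕ) : ℤ) = (k : ℤ) - 1 := by omega
          rw [h2]
  have hsumS : S.sum = ∑ i ∈ Finset.Ioo 0 k, g i * a i := by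
    rw [hS, Multiset.sum_bind]
    have h1 : (Multiset.map (fun i => (Multiset.replicate (g i).toNat (a i)).sum)
        (Finset.Ioo 0 k).val).sum
        = ∑ i ∈ Finset.Ioo 0 k, (Multiset.replicate (g i).toNat (a i)).sum := rfl
    rw [h1]
    apply Finset.sum_congr rfl
    intro i _
    rw [Multiset.sum_replicate, nsmul_eq_mul, Int.toNat_of_nonneg (hg0 i)]
  refine ⟨S, hmemS, ?_, hcardS⟩
  have hsub : Finset.Ioo 0 k ⊆ Finset.range (k+1) := by
    intro i hi; rw [Finset.mem_Ioo] at hi; exact Finset.mem_range.mpr (by omega)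
  have e1 : ∑ i ∈ Finset.range (k+1) \ Finset.Ioo 0 k, (n * f (a i)) * a i
      = ∑ i ∈ Finset.range (k+1), (n * f (a i)) * a i
        - ∑ i ∈ Finset.Ioo 0 k, (n * f (a i)) * a i :=
    Finset.sum_sdiff_eq_sub hsub
  have e2 : ∑ i ∈ Finset.Ioo 0 k, ((n * f (a i)) - g i) * a i
      = ∑ i ∈ Finset.Ioo 0 k, (n * f (a i)) * a i - ∑ i ∈ Finset.Ioo 0 k, g i * a i := by
    rw [← Finset.sum_sub_distrib]
    apply Finset.sum_congr rfl
    intro i _; ring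
  have hn : ∑ i ∈ Finset.range (k+1), (n * f (a i)) * a i = n := by
    calc ∑ i ∈ Finset.range (k+1), (n * f (a i)) * a i
        = n * ∑ i ∈ Finset.range (k+1), f (a i) * a i := by
          rw [Finset.mul_sum]; apply Finset.sum_congr rfl; intro i _; ring
      _ = n := by rw [hsum1]; ring
  have hdecomp : n - S.sum =
      (∑ i ∈ Finset.range (k+1) \ Finset.Ioo 0 k, (n * f (a i)) * a i)
      + (∑ i ∈ Finset.Ioo 0 k, ((n * f (a i)) - g i) * a i) := by
    rw [e1, e2, hsumS, hn]; ring
  rw [hdecomp]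
  apply dvd_add
  · apply Finset.dvd_sum
    intro i hi
    rw [Finset.mem_sdiff, Finset.mem_range, Finset.mem_Ioo] at hi
    have : i = 0 ∨ i = k := by omega
    rcases this with rfl | rfl
    · rw [ha0]; simp
    · exact dvd_mul_left _ _
  · apply Finset.dvd_sum
    intro i _
    have h3 : n * f (a i) - g i = a k * (n * f (a i) / a k) := by
      rw [hg]
      simp only []
      rw [Int.emod_def]
      ring
    rw [h3]
    exact Dvd.dvd.mul_right (dvd_mul_right _ _) _

lemma middle_rep (k : ℕ) (hk : 2 ≤ k) (a : ℕ → ℤ) (ha0 : a 0 = 0)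
    (hmono : ∀ i j, i ≤ k → j ≤ k → i < j → a i < a j)
    (A : Finset ℤ) (hA : A = (Finset.range (k + 1)).image a) (hgcd : A.gcd id = 1)
    (hsym : A.image (fun x => a k - x) = A)
    (t : ℕ) (ht : 0 < t) (h : ℕ) (n : ℤ)
    (hc1 : ((k : ℤ) - 1) * (a k - 1)^2 + t * a k ≤ n)
    (hc2 : n ≤ (h : ℤ) * a k - (((k : ℤ) - 1) * (a k - 1)^2 + t * a k)) :
    t ≤ repCount A h n := by
  classical
  have akpos : 0 < a k := by
    have := hmono 0 k (by omega) (le_refl k) (by omega); omega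
  have a1pos : 0 < a 1 := by
    have := hmono 0 1 (by omega) (by omega) (by omega); omega
  have a1lt : a 1 < a k := hmono 1 k (by omega) (le_refl k) (by omega)
  have hmemA : ∀ i, i ≤ k → a i ∈ A := by
    intro i hi
    rw [hA]; exact Finset.mem_image_of_mem _ (Finset.mem_range.mpr (by omega))
  have h0A : (0 : ℤ) ∈ A := ha0 ▸ hmemA 0 (by omega)
  have hakA : a k ∈ A := hmemA k (le_refl k)
  have ha1A : a 1 ∈ A := hmemA 1 (by omega)
  have hbA : a k - a 1 ∈ A := by
    rw [← hsym]; exact Finset.mem_image_of_mem _ ha1A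
  have hbpos : 0 < a k - a 1 := by omega
  obtain ⟨S, hSelem, hSdvd, hScard⟩ := residue_rep k hk a ha0 hmono A hA hgcd n
  have hSpos : ∀ x ∈ S, (1 : ℤ) ≤ x := fun x hx => (hSelem x hx).2.1
  have hSsum_le : S.sum ≤ (Multiset.card S : ℤ) * (a k - 1) := by
    have := Multiset.sum_le_card_nsmul S (a k - 1) (fun x hx => (hSelem x hx).2.2)
    rwa [nsmul_eq_mul] at this
  have hcard_le_sum : (Multiset.card S : ℤ) ≤ S.sum := multiset_card_le_sum S hSpos
  set q : ℤ := (n - S.sum) / a k with hqdef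
  have hq : a k * q = n - S.sum := Int.mul_ediv_cancel' hSdvd
  have hSsum2 : S.sum ≤ ((k : ℤ) - 1) * (a k - 1)^2 := by
    calc S.sum ≤ (Multiset.card S : ℤ) * (a k - 1) := hSsum_le
      _ ≤ ((k : ℤ) - 1) * (a k - 1) * (a k - 1) := by
          apply mul_le_mul_of_nonneg_right hScard (by omega)
      _ = ((k : ℤ) - 1) * (a k - 1)^2 := by ring
  have hqt : (t : ℤ) ≤ q := by
    have h1 : (t : ℤ) * a k ≤ a k * q := by
      rw [hq]; linarith
    nlinarith
  have hKey : (Multiset.card S : ℤ) + q + (t : ℤ) - 1 ≤ (h : ℤ) - 1 := by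
    have hm : ((Multiset.card S : ℤ) + q + (t : ℤ) - 1) * a k ≤ ((h : ℤ) - 1) * a k := by
      have e1 : (Multiset.card S : ℤ) * (a k - 1) ≤ ((k:ℤ) - 1) * (a k - 1) * (a k - 1) :=
        mul_le_mul_of_nonneg_right hScard (by omega)
      have e2 : q * a k = n - S.sum := by linarith [hq]
      nlinarith
    exact le_of_mul_le_mul_right hm akpos
  set qn : ℕ := q.toNat with hqndef
  have hqnz : (qn : ℤ) = q := Int.toNat_of_nonneg (by omega)
  have hqnt : t ≤ qn := by omega
  have hcard_h : Multiset.card S + qn + t ≤ h := by omega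
  set M0 : ℕ → Multiset ℤ := fun j =>
    S + Multiset.replicate (qn - j) (a k) + Multiset.replicate j (a 1)
      + Multiset.replicate j (a k - a 1) with hM0
  have hM0card : ∀ j, j ≤ qn → Multiset.card (M0 j) = Multiset.card S + qn + j := by
    intro j hj
    simp only [hM0, Multiset.card_add, Multiset.card_replicate]
    omega
  have hM0sum : ∀ j, j ≤ qn → (M0 j).sum = n := by
    intro j hj
    simp only [hM0, Multiset.sum_add, Multiset.sum_replicate, nsmul_eq_mul]
    have : ((qn - j : ℕ) : ℤ) = q - j := by omega
    rw [this]
    have : S.sum + (q - ↑j) * a k + ↑j * a 1 + ↑j * (a k - a 1) = S.sum + q * a k := by ring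
    rw [this]
    linarith [hq]
  have hM0mem : ∀ j, ∀ x ∈ M0 j, x ∈ A := by
    intro j x hx
    simp only [hM0, Multiset.mem_add] at hx
    rcases hx with ((hx | hx) | hx) | hx
    · exact (hSelem x hx).1
    · rw [Multiset.eq_of_mem_replicate hx]; exact hakA
    · rw [Multiset.eq_of_mem_replicate hx]; exact ha1A
    · rw [Multiset.eq_of_mem_replicate hx]; exact hbA
  have hM0pos : ∀ j, ∀ x ∈ M0 j, 0 < x := by
    intro j x hx
    simp only [hM0, Multiset.mem_add] at hx
    rcases hx with ((hx | hx) | hx) | hx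
    · exact (hSelem x hx).2.1
    · rw [Multiset.eq_of_mem_replicate hx]; exact akpos
    · rw [Multiset.eq_of_mem_replicate hx]; exact a1pos
    · rw [Multiset.eq_of_mem_replicate hx]; exact hbpos
  have hM0count : ∀ j, Multiset.count 0 (M0 j) = 0 := by
    intro j
    rw [Multiset.count_eq_zero]
    intro hmem
    exact absurd (hM0pos j 0 hmem) (lt_irrefl 0)
  set f : ℕ → Sym ℤ h := fun j =>
    if hj : Multiset.card (M0 j) ≤ h then
      Sym.mk (M0 j + Multiset.replicate (h - Multiset.card (M0 j)) 0) (by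
        rw [Multiset.card_add, Multiset.card_replicate]; omega)
    else Sym.replicate h 0 with hfdef
  have hjle : ∀ j, j < t → Multiset.card (M0 j) ≤ h := by
    intro j hjt
    rw [hM0card j (by omega)]; omega
  have hfcount : ∀ j, j < t →
      Multiset.count 0 (f j).toMultiset = h - (Multiset.card S + qn + j) := by
    intro j hjt
    simp only [hfdef, dif_pos (hjle j hjt)]
    show Multiset.count 0 (M0 j + Multiset.replicate (h - Multiset.card (M0 j)) 0)
        = h - (Multiset.card S + qn + j)
    rw [Multiset.count_add, Multiset.count_replicate, if_pos rfl, hM0count, hM0card j (by omega)]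
    omega
  have hmaps : ∀ j ∈ Finset.range t,
      f j ∈ (A.sym h).filter (fun m => (Sym.toMultiset m).sum = n) := by
    intro j hj
    rw [Finset.mem_range] at hj
    rw [Finset.mem_filter, Finset.mem_sym_iff]
    simp only [hfdef, dif_pos (hjle j hj)]
    constructor
    · intro x hx
      rw [Sym.mem_mk, Multiset.mem_add] at hx
      rcases hx with hx | hx
      · exact hM0mem j x hx
      · rw [Multiset.eq_of_mem_replicate hx]; exact h0A
    · show (M0 j + Multiset.replicate (h - Multiset.card (M0 j)) 0).sum = n
      rw [Multiset.sum_add, Multiset.sum_replicate, smul_zero, add_zero, hM0sum j (by omega)]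
  have hinj : Set.InjOn f (Finset.range t : Set ℕ) := by
    intro j1 hj1 j2 hj2 hf12
    simp only [Finset.coe_range, Set.mem_Iio] at hj1 hj2
    have := congrArg (fun (m : Sym ℤ h) => Multiset.count 0 m.toMultiset) hf12
    rw [hfcount j1 hj1, hfcount j2 hj2] at this
    have h1 := hjle j1 hj1
    have h2 := hjle j2 hj2
    have e1 := hM0card j1 (by omega)
    have e2 := hM0card j2 (by omega)
    omega
  calc t = (Finset.range t).card := (Finset.card_range t).symm
    _ ≤ _ := Finset.card_le_card_of_injOn f hmaps hinj

theorem stmt13 (k : ℕ) (hk : 2 ≤ k) (a : ℕ → ℤ)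
    (ha0 : a 0 = 0) (hmono : ∀ i j, i ≤ k → j ≤ k → i < j → a i < a j)
    (A : Finset ℤ) (hA : A = (Finset.range (k + 1)).image a)
    (hgcd : A.gcd id = 1)
    (hsym : A.image (fun x => a k - x) = A)
    (t : ℕ) (ht : 0 < t)
    (h_t : ℕ) (hh_t : (h_t : ℤ) = ((k : ℤ) - 1) * ((t : ℤ) * a k - 1) * a k + 1) :
    ∃ c : ℤ, 0 ≤ c ∧ ∃ C : Finset ℤ,
      ↑C ⊆ Set.Icc (0 : ℤ) (c - 2) ∧
      ∀ h : ℕ, h_t ≤ h →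
        sumsetT A h t =
          ↑C ∪ Set.Icc c ((h : ℤ) * a k - c) ∪ ((fun x => (h : ℤ) * a k - x) '' ↑C) := by
  classical
  have akpos : 0 < a k := by
    have := hmono 0 k (by omega) (le_refl k) (by omega); omega
  have a1pos : 0 < a 1 := by
    have := hmono 0 1 (by omega) (by omega) (by omega); omega
  have a1lt : a 1 < a k := hmono 1 k (by omega) (le_refl k) (by omega)
  have ak2 : 2 ≤ a k := by omega
  have h0A : (0 : ℤ) ∈ A := by
    rw [hA]
    have : a 0 ∈ (Finset.range (k+1)).image a :=
      Finset.mem_image_of_mem _ (Finset.mem_range.mpr (by omega))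
    rwa [ha0] at this
  have hbd : ∀ x ∈ A, 0 ≤ x ∧ x ≤ a k := by
    intro x hx
    rw [hA, Finset.mem_image] at hx
    obtain ⟨i, hi, rfl⟩ := hx
    rw [Finset.mem_range] at hi
    constructor
    · rcases Nat.eq_zero_or_pos i with rfl | hip
      · omega
      · have := hmono 0 i (by omega) (by omega) (by omega); omega
    · rcases eq_or_lt_of_le (show i ≤ k by omega) with rfl | hik
      · exact le_refl _
      · exact le_of_lt (hmono i k (by omega) (le_refl k) hik)
  have hnn : ∀ x ∈ A, (0 : ℤ) ≤ x := fun x hx => (hbd x hx).1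
  set cZ : ℤ := ((k : ℤ) - 1) * (a k - 1)^2 + (t : ℤ) * a k with hcZ
  have hkz : (2:ℤ) ≤ (k:ℤ) := by exact_mod_cast hk
  have htz : (1:ℤ) ≤ (t:ℤ) := by exact_mod_cast ht
  have hcZpos : 0 < cZ := by
    have h1 : (0:ℤ) ≤ ((k:ℤ)-1)*(a k-1)^2 := mul_nonneg (by omega) (sq_nonneg _)
    nlinarith
  have hcZht : cZ ≤ (h_t : ℤ) := by
    rw [hh_t, hcZ]
    nlinarith [mul_nonneg (mul_nonneg (show (0:ℤ) ≤ (t:ℤ)-1 by omega) (show (0:ℤ) ≤ a k by omega))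
        (show (0:ℤ) ≤ ((k:ℤ)-1) * a k - 1 by nlinarith),
      mul_nonneg (show (0:ℤ) ≤ a k - 1 by omega) (show (0:ℤ) ≤ (k:ℤ)-2 by omega)]
  have hmidfull : ∀ (h' : ℕ) (m : ℤ), cZ ≤ m → m ≤ (h' : ℤ) * a k - cZ → t ≤ repCount A h' m := by
    intro h' m h1 h2
    rw [hcZ] at h1 h2
    exact middle_rep k hk a ha0 hmono A hA hgcd hsym t ht h' m h1 h2
  set P : ℕ → Prop := fun c' => ∀ m : ℤ, (c' : ℤ) ≤ m → m ≤ cZ → t ≤ repCount A h_t m with hP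
  haveI : DecidablePred P := fun _ => Classical.dec _
  have hPN : P cZ.toNat := by
    intro m h1 h2
    have h1' : cZ ≤ m := by omega
    have hmeq : m = cZ := le_antisymm h2 h1'
    subst hmeq
    apply hmidfull h_t cZ le_rfl
    nlinarith [mul_le_mul_of_nonneg_left ak2 (show (0:ℤ) ≤ (h_t:ℤ) from Int.natCast_nonneg _)]
  have hex : ∃ c', P c' := ⟨cZ.toNat, hPN⟩
  set c' := Nat.find hex with hc'def
  have hPc' : P c' := Nat.find_spec hex
  have hc'le : (c' : ℤ) ≤ cZ := by
    have := Nat.find_le (h := hex) hPN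
    omega
  set C : Finset ℤ := (Finset.Icc (0:ℤ) ((c' : ℤ) - 2)).filter (fun m => t ≤ repCount A h_t m)
    with hCdef
  refine ⟨(c' : ℤ), Int.natCast_nonneg _, C, ?_, ?_⟩
  · intro x hx
    rw [Finset.mem_coe, hCdef, Finset.mem_filter, Finset.mem_Icc] at hx
    exact Set.mem_Icc.mpr hx.1
  · intro h hh
    have hhz : (h_t : ℤ) ≤ (h : ℤ) := by exact_mod_cast hh
    have hsmall : ∀ m : ℤ, m ≤ cZ → repCount A h_t m = repCount A h m :=
      fun m hm => repCount_stable A h0A hnn (le_trans hm hcZht) hh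
    have hlowC : ∀ m : ℤ, 0 ≤ m → m ≤ (c' : ℤ) - 1 → t ≤ repCount A h m → m ∈ C := by
      intro m h0 h1 hrep
      have hrep' : t ≤ repCount A h_t m := by rw [hsmall m (by omega)]; exact hrep
      have hne : m ≠ (c' : ℤ) - 1 := by
        intro heq
        have hc1 : 1 ≤ c' := by omega
        have hPm : P (c' - 1) := by
          intro m' h1' h2'
          rcases eq_or_lt_of_le h1' with heq' | hlt'
          · have hm'm : m' = m := by omega
            rw [hm'm]; exact hrep'
          · exact hPc' m' (by omega) h2'
        exact Nat.find_min hex (show c' - 1 < c' by omega) hPm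
      rw [hCdef, Finset.mem_filter, Finset.mem_Icc]
      exact ⟨⟨h0, by omega⟩, hrep'⟩
    have hmid : ∀ m : ℤ, (c' : ℤ) ≤ m → m ≤ (h : ℤ) * a k - (c' : ℤ) → t ≤ repCount A h m := by
      intro m h1 h2
      by_cases hm1 : m ≤ cZ
      · rw [← hsmall m hm1]; exact hPc' m h1 hm1
      by_cases hm2 : (h : ℤ) * a k - cZ ≤ m
      · have h2' : (h : ℤ) * a k - m ≤ cZ := by omega
        have h1' : (c' : ℤ) ≤ (h : ℤ) * a k - m := by omega
        have hrefl := hPc' _ h1' h2'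
        rw [hsmall _ h2'] at hrefl
        rw [repCount_reflect A (a k) hsym h m] at hrefl
        exact hrefl
      · push_neg at hm1 hm2
        exact hmidfull h m (le_of_lt hm1) (by omega)
    ext n
    simp only [sumsetT, Set.mem_setOf_eq, Set.mem_union, Set.mem_Icc, Set.mem_image,
      Finset.mem_coe]
    constructor
    · intro hrep
      obtain ⟨hn0, hnub⟩ := rep_bounds A (a k) hbd ht hrep
      by_cases hcase1 : n ≤ (c' : ℤ) - 1
      · exact Or.inl (Or.inl (hlowC n hn0 hcase1 hrep))
      by_cases hcase2 : (h : ℤ) * a k - (c' : ℤ) + 1 ≤ n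
      · refine Or.inr ⟨(h : ℤ) * a k - n, ?_, by ring⟩
        apply hlowC _ (by omega) (by omega)
        rw [repCount_reflect A (a k) hsym h n]
        exact hrep
      · exact Or.inl (Or.inr ⟨by omega, by omega⟩)
    · intro hn
      rcases hn with (hnC | hmid') | ⟨m, hmC, heq⟩
      · rw [hCdef, Finset.mem_filter, Finset.mem_Icc] at hnC
        rw [← hsmall n (by omega)]
        exact hnC.2
      · exact hmid n hmid'.1 hmid'.2
      · rw [hCdef, Finset.mem_filter, Finset.mem_Icc] at hmC
        have hrep : t ≤ repCount A h_t m := hmC.2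
        rw [hsmall m (by omega)] at hrep
        subst heq
        show t ≤ repCount A h ((h : ℤ) * a k - m)
        rw [repCount_reflect A (a k) hsym h m]
        exact hrep
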